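/- arXiv:2009.06409 — 10 statements merged into one kernel-verified Lean document; each statement's English description precedes it below -/
import Mathlib

section
/- Consider the SIR model. If either (i) R₀ ≤ N/S(0) and I(0) ≤ M, or (ii) N/S(0) < R₀ ≤ N/(N−M), then I(t) ≤ M for all t ≥ 0. -/
/-- In the SIR model, if either (i) R₀ ≤ N/S(0) and I(0) ≤ M, or
(ii) N/S(0) < R₀ ≤ N/(N−M), then I(t) ≤ M for all t ≥ 0. -/
theorem sir_threshold_sufficient
    (N γ R₀ M : ℝ) (S I R : ℝ → ℝ)
    (hN : 0 < N) (hγ : 0 < γ) (hR₀ : 0 < R₀)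
    (hS' : ∀ t ≥ (0:ℝ), HasDerivAt S (-(γ * R₀ / N) * S t * I t) t)
    (hI' : ∀ t ≥ (0:ℝ), HasDerivAt I ((γ * R₀ / N) * S t * I t - γ * I t) t)
    (hR' : ∀ t ≥ (0:ℝ), HasDerivAt R (γ * I t) t)
    (hSnn : ∀ t ≥ (0:ℝ), 0 ≤ S t) (hInn : ∀ t ≥ (0:ℝ), 0 ≤ I t)
    (hRnn : ∀ t ≥ (0:ℝ), 0 ≤ R t)
    (hsum : ∀ t ≥ (0:ℝ), S t + I t + R t = N)
    (hS0 : 0 < S 0) (hI0 : 0 < I 0)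
    (hM : 0 < M) (hMN : M < N)
    (hcond : (R₀ ≤ N / S 0 ∧ I 0 ≤ M) ∨ (N / S 0 < R₀ ∧ R₀ ≤ N / (N - M))) :
    ∀ t ≥ (0:ℝ), I t ≤ M := by
  have hIci : interior (Set.Ici (0:ℝ)) = Set.Ioi 0 := interior_Ici
  set β := γ * R₀ / N with hβdef
  have hβ : 0 < β := by positivity
  have hSle : ∀ t ≥ (0:ℝ), S t ≤ N := fun t ht => by
    have h1 := hsum t ht; have h2 := hInn t ht; have h3 := hRnn t ht; linarith
  have hIle : ∀ t ≥ (0:ℝ), I t ≤ N := fun t ht => by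
    have h1 := hsum t ht; have h2 := hSnn t ht; have h3 := hRnn t ht; linarith
  -- S stays positive
  have hGmono : MonotoneOn (fun t => S t * Real.exp (β * N * t)) (Set.Ici 0) := by
    apply monotoneOn_of_deriv_nonneg (convex_Ici 0)
    · intro t ht
      exact (((hS' t ht).mul (((hasDerivAt_id t).const_mul (β*N)).exp)).continuousAt).continuousWithinAt
    · rw [hIci]
      intro t ht
      exact (((hS' t (le_of_lt ht)).mul (((hasDerivAt_id t).const_mul (β*N)).exp)).differentiableAt).differentiableWithinAt
    · rw [hIci]
      intro t ht
      have ht' := (Set.mem_Ioi.mp ht).le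
      have hd := (hS' t ht').mul (((hasDerivAt_id t).const_mul (β*N)).exp)
      simp only [id_eq] at hd
      rw [show deriv (fun t => S t * Real.exp (β * N * t)) t = _ from hd.deriv]
      have he := Real.exp_pos (β * N * t)
      have h1 := hSnn t ht'; have h3 := hIle t ht'
      simp only [id_eq, mul_one]
      nlinarith [mul_nonneg (mul_nonneg (mul_nonneg hβ.le h1) he.le) (sub_nonneg.2 h3)]
  have hSpos : ∀ t ≥ (0:ℝ), 0 < S t := by
    intro t ht
    have h := hGmono Set.self_mem_Ici ht ht
    simp only [mul_zero, Real.exp_zero, mul_one] at h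
    nlinarith [Real.exp_pos (β*N*t), hSnn t ht]
  rcases hcond with ⟨hc1, hc2⟩ | ⟨hc1, hc2⟩
  · -- case (i)
    have hSanti : AntitoneOn S (Set.Ici 0) := by
      apply antitoneOn_of_deriv_nonpos (convex_Ici 0)
      · intro t ht; exact (hS' t ht).continuousAt.continuousWithinAt
      · rw [hIci]; intro t ht
        exact (hS' t ht.le).differentiableAt.differentiableWithinAt
      · rw [hIci]; intro t ht
        rw [(hS' t ht.le).deriv]
        have h1 := hSnn t ht.le; have h2 := hInn t ht.le
        nlinarith [mul_nonneg h1 h2]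
    have hβS0 : β * S 0 ≤ γ := by
      have hRS : R₀ * S 0 ≤ N := (le_div_iff₀ hS0).mp hc1
      rw [hβdef, div_mul_eq_mul_div, div_le_iff₀ hN]
      nlinarith
    have hIanti : AntitoneOn I (Set.Ici 0) := by
      apply antitoneOn_of_deriv_nonpos (convex_Ici 0)
      · intro t ht; exact (hI' t ht).continuousAt.continuousWithinAt
      · rw [hIci]; intro t ht
        exact (hI' t ht.le).differentiableAt.differentiableWithinAt
      · rw [hIci]; intro t ht
        rw [(hI' t ht.le).deriv]
        have hSt := hSanti Set.self_mem_Ici (Set.mem_Ioi.mp ht).le (Set.mem_Ioi.mp ht).le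
        have hIt := hInn t ht.le
        have hβSt : β * S t ≤ γ := by nlinarith
        nlinarith [mul_nonneg hIt (sub_nonneg.2 hβSt)]
    intro t ht
    exact le_trans (hIanti Set.self_mem_Ici ht ht) hc2
  · -- case (ii)
    set c := N / R₀ with hcdef
    have hc : 0 < c := by positivity
    have hcS0 : c < S 0 := by
      rw [hcdef, div_lt_iff₀ hR₀]
      have := (div_lt_iff₀ hS0).mp hc1
      nlinarith
    have hNMc : N - M ≤ c := by
      have h1 : R₀ * (N - M) ≤ N := (le_div_iff₀ (by linarith)).mp hc2
      rw [hcdef, le_div_iff₀ hR₀]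
      nlinarith
    set V := fun t => I t + S t - c * Real.log (S t) with hVdef
    have hV' : ∀ t ≥ (0:ℝ), HasDerivAt V 0 t := by
      intro t ht
      have hst := hSpos t ht
      have hlog := (hS' t ht).log (ne_of_gt hst)
      have h := ((hI' t ht).add (hS' t ht)).sub (hlog.const_mul c)
      convert h using 1
      case e'_4 => rfl
      case e'_5 => rfl
      case e'_8 => rfl
      rw [hβdef, hcdef]
      field_simp
      ring
    have hVc : ContinuousOn V (Set.Ici 0) := fun t ht => ((hV' t ht).continuousAt).continuousWithinAt
    have hVd : DifferentiableOn ℝ V (interior (Set.Ici 0)) := by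
      rw [hIci]
      exact fun t ht => ((hV' t (le_of_lt ht)).differentiableAt).differentiableWithinAt
    have hVderiv : ∀ x ∈ interior (Set.Ici (0:ℝ)), deriv V x = 0 := by
      rw [hIci]; exact fun t ht => (hV' t ht.le).deriv
    have hVmono := monotoneOn_of_deriv_nonneg (convex_Ici 0) hVc hVd (fun x hx => (hVderiv x hx).ge)
    have hVanti := antitoneOn_of_deriv_nonpos (convex_Ici 0) hVc hVd (fun x hx => (hVderiv x hx).le)
    intro t ht
    have hVeq : I t + S t - c * Real.log (S t) = I 0 + S 0 - c * Real.log (S 0) :=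
      le_antisymm (hVanti Set.self_mem_Ici ht ht) (hVmono Set.self_mem_Ici ht ht)
    have hst := hSpos t ht
    have hA : c * Real.log (S t) ≤ S t - c + c * Real.log c := by
      have h := Real.log_le_sub_one_of_pos (show 0 < S t / c by positivity)
      rw [Real.log_div (ne_of_gt hst) (ne_of_gt hc)] at h
      have h2 := mul_le_mul_of_nonneg_left h hc.le
      rw [mul_sub, mul_sub, mul_one] at h2
      rw [show c * (S t / c) = S t from by field_simp] at h2
      linarith
    have hB : c * Real.log c - c * Real.log (S 0) ≤ 0 := by
      have h : Real.log (c / S 0) < 0 := Real.log_neg (by positivity) ((div_lt_one hS0).2 hcS0)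
      rw [Real.log_div (ne_of_gt hc) (ne_of_gt hS0)] at h
      nlinarith
    have hIS0 : I 0 + S 0 ≤ N := by
      have h1 := hsum 0 le_rfl; have h2 := hRnn 0 le_rfl; linarith
    linarith
end

section
/- In the SIR model with S(t) > 0 for all t ≥ 0, the infected population satisfies I(t) ≤ (N/R₀)·(ln(N/(R₀·S(0))) − 1) − R(0) + N for all t ≥ 0. -/
/-- In the SIR model with S(t) > 0 for all t ≥ 0, the infected population
satisfies I(t) ≤ (N/R₀)·(ln(N/(R₀·S(0))) − 1) − R(0) + N for all t ≥ 0. -/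
theorem sir_Imax_upper_bound
    (N γ R₀ : ℝ) (S I R : ℝ → ℝ)
    (hN : 0 < N) (hγ : 0 < γ) (hR₀ : 0 < R₀)
    (hS' : ∀ t ≥ (0:ℝ), HasDerivAt S (-(γ * R₀ / N) * S t * I t) t)
    (hI' : ∀ t ≥ (0:ℝ), HasDerivAt I ((γ * R₀ / N) * S t * I t - γ * I t) t)
    (hR' : ∀ t ≥ (0:ℝ), HasDerivAt R (γ * I t) t)
    (hSpos : ∀ t ≥ (0:ℝ), 0 < S t)
    (hsum : ∀ t ≥ (0:ℝ), S t + I t + R t = N) :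
    ∀ t ≥ (0:ℝ),
      I t ≤ (N / R₀) * (Real.log (N / (R₀ * S 0)) - 1) - R 0 + N := by
  intro t ht
  set a : ℝ := N / R₀ with ha
  have hapos : 0 < a := div_pos hN hR₀
  set V : ℝ → ℝ := fun u => S u + I u - a * Real.log (S u) with hVdef
  -- V has derivative 0 on [0, ∞)
  have hV : ∀ u ≥ (0:ℝ), HasDerivAt V 0 u := by
    intro u hu
    have hSu := hSpos u hu
    have h1 := ((hS' u hu).add (hI' u hu)).sub (((hS' u hu).log hSu.ne').const_mul a)
    convert h1 using 1
    · rfl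
    · rfl
    · rfl
    rw [ha]
    field_simp [hR₀.ne', hN.ne', hSu.ne']
    ring
  -- V t = V 0
  have hconst : V t = V 0 := by
    rcases eq_or_lt_of_le ht with h | h
    · rw [← h]
    · have hcont : ContinuousOn V (Set.Icc 0 t) := fun u hu =>
        ((hV u hu.1).continuousAt).continuousWithinAt
      have hderiv : ∀ u ∈ Set.Ico (0:ℝ) t, HasDerivWithinAt V 0 (Set.Ici u) u :=
        fun u hu => (hV u hu.1).hasDerivWithinAt
      exact constant_of_has_deriv_right_zero hcont hderiv t ⟨ht, le_refl t⟩
  -- key inequality : a * log x - x ≤ a * (log a - 1) for x > 0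
  have hkey : ∀ x : ℝ, 0 < x → a * Real.log x - x ≤ a * (Real.log a - 1) := by
    intro x hx
    have h := Real.log_le_sub_one_of_pos (div_pos hx hapos)
    rw [Real.log_div hx.ne' hapos.ne'] at h
    nlinarith [mul_le_mul_of_nonneg_left h hapos.le,
      mul_div_cancel₀ x hapos.ne']
  have hS0 := hSpos 0 le_rfl
  have hSt := hSpos t ht
  have hsum0 := hsum 0 le_rfl
  have hVt : S t + I t - a * Real.log (S t) = S 0 + I 0 - a * Real.log (S 0) := hconst
  have hk := hkey (S t) hSt
  -- rewrite target's log
  have hlog : Real.log (N / (R₀ * S 0)) = Real.log a - Real.log (S 0) := by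
    rw [Real.log_div hN.ne' (by positivity), Real.log_mul hR₀.ne' hS0.ne',
      ha, Real.log_div hN.ne' hR₀.ne']
    ring
  rw [hlog]
  nlinarith [hk, hVt, hsum0]
end

section
/- In the SIR model, if R₀ ≥ N/S(0) then the bound (N/R₀)·(ln(N/(R₀·S(0))) − 1) − R(0) + N is attained: there exists t* ≥ 0 with I(t*) = (N/R₀)·(ln(N/(R₀·S(0))) − 1) − R(0) + N, and I(t) ≤ I(t*) for all t ≥ 0. -/
open Set

private lemma sir_mono_aux {f f' : ℝ → ℝ}
    (hd : ∀ t ≥ (0:ℝ), HasDerivAt f (f' t) t)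
    (hnn : ∀ t > (0:ℝ), 0 ≤ f' t) : MonotoneOn f (Set.Ici 0) := by
  apply monotoneOn_of_deriv_nonneg (convex_Ici 0)
  · exact fun t ht => (hd t ht).continuousAt.continuousWithinAt
  · intro t ht
    rw [interior_Ici] at ht
    exact ((hd t (le_of_lt ht)).differentiableAt).differentiableWithinAt
  · intro t ht
    rw [interior_Ici] at ht
    rw [(hd t (le_of_lt ht)).deriv]
    exact hnn t ht

private lemma sir_anti_aux {f f' : ℝ → ℝ}
    (hd : ∀ t ≥ (0:ℝ), HasDerivAt f (f' t) t)
    (hnp : ∀ t > (0:ℝ), f' t ≤ 0) : AntitoneOn f (Set.Ici 0) := by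
  apply antitoneOn_of_deriv_nonpos (convex_Ici 0)
  · exact fun t ht => (hd t ht).continuousAt.continuousWithinAt
  · intro t ht
    rw [interior_Ici] at ht
    exact ((hd t (le_of_lt ht)).differentiableAt).differentiableWithinAt
  · intro t ht
    rw [interior_Ici] at ht
    rw [(hd t (le_of_lt ht)).deriv]
    exact hnp t ht

/-- In the SIR model, if R₀ ≥ N/S(0) then the bound
(N/R₀)·(ln(N/(R₀·S(0))) − 1) − R(0) + N is attained: there exists t* ≥ 0 with
I(t*) equal to the bound, and I(t) ≤ I(t*) for all t ≥ 0. -/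
theorem sir_Imax_attained
    (N γ R₀ : ℝ) (S I R : ℝ → ℝ)
    (hN : 0 < N) (hγ : 0 < γ) (hR₀ : 0 < R₀)
    (hS' : ∀ t ≥ (0:ℝ), HasDerivAt S (-(γ * R₀ / N) * S t * I t) t)
    (hI' : ∀ t ≥ (0:ℝ), HasDerivAt I ((γ * R₀ / N) * S t * I t - γ * I t) t)
    (hR' : ∀ t ≥ (0:ℝ), HasDerivAt R (γ * I t) t)
    (hSnn : ∀ t ≥ (0:ℝ), 0 ≤ S t) (hInn : ∀ t ≥ (0:ℝ), 0 ≤ I t)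
    (hRnn : ∀ t ≥ (0:ℝ), 0 ≤ R t)
    (hsum : ∀ t ≥ (0:ℝ), S t + I t + R t = N)
    (hS0 : 0 < S 0) (hI0 : 0 < I 0)
    (hcond : R₀ ≥ N / S 0) :
    ∃ tstar ≥ (0:ℝ),
      I tstar = (N / R₀) * (Real.log (N / (R₀ * S 0)) - 1) - R 0 + N ∧
      ∀ t ≥ (0:ℝ), I t ≤ I tstar := by
  set β : ℝ := γ * R₀ / N with hβ
  have hβpos : 0 < β := by positivity
  set a : ℝ := N / R₀ with ha
  have hapos : 0 < a := by positivity
  have haβ : a * β = γ := by rw [ha, hβ]; field_simp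
  -- I ≤ N
  have hIleN : ∀ t ≥ (0:ℝ), I t ≤ N := by
    intro t ht
    have := hsum t ht
    nlinarith [hSnn t ht, hRnn t ht]
  -- S is positive for all t ≥ 0
  have hSpos : ∀ t ≥ (0:ℝ), 0 < S t := by
    have hmono : MonotoneOn (fun t => S t * Real.exp (γ * R₀ * t)) (Set.Ici 0) := by
      apply sir_mono_aux (f' := fun t =>
        (-(γ * R₀ / N) * S t * I t) * Real.exp (γ * R₀ * t)
          + S t * (Real.exp (γ * R₀ * t) * (γ * R₀)))
      · intro t ht
        have he : HasDerivAt (fun t => Real.exp (γ * R₀ * t))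
            (Real.exp (γ * R₀ * t) * (γ * R₀)) t := by
          simpa using (((hasDerivAt_id t).const_mul (γ * R₀)).exp)
        exact (hS' t ht).mul he
      · intro t ht
        have h1 : 0 ≤ S t := hSnn t ht.le
        have h2 : I t ≤ N := hIleN t ht.le
        have h3 : 0 < Real.exp (γ * R₀ * t) := Real.exp_pos _
        have key : (-(γ * R₀ / N) * S t * I t) * Real.exp (γ * R₀ * t)
            + S t * (Real.exp (γ * R₀ * t) * (γ * R₀))
            = Real.exp (γ * R₀ * t) * (β * S t * (N - I t)) := by
          rw [hβ]; field_simp; ring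
        rw [key]
        exact mul_nonneg h3.le (mul_nonneg (mul_nonneg hβpos.le h1) (by linarith))
    intro t ht
    have := hmono (self_mem_Ici) ht ht
    simp only [mul_zero, Real.exp_zero, mul_one] at this
    have hexp : 0 < Real.exp (γ * R₀ * t) := Real.exp_pos _
    nlinarith
  -- the invariant V = I + S - a log S is constant
  set V : ℝ → ℝ := fun t => I t + S t - a * Real.log (S t) with hV
  have hVd : ∀ t ≥ (0:ℝ), HasDerivAt V 0 t := by
    intro t ht
    have hlog : HasDerivAt (fun t => Real.log (S t))
        ((-β * S t * I t) / S t) t :=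
      (hS' t ht).log (ne_of_gt (hSpos t ht))
    have := ((hI' t ht).add (hS' t ht)).sub (hlog.const_mul a)
    refine this.congr_deriv (Eq.symm ?_)
    have hSne : S t ≠ 0 := ne_of_gt (hSpos t ht)
    have h5 : -β * S t * I t / S t = -β * I t := by field_simp
    rw [h5]
    linear_combination (-(I t)) * haβ
  have hVconst : ∀ t ≥ (0:ℝ), V t = V 0 := by
    have hm := sir_mono_aux (f' := fun _ => (0:ℝ)) hVd (fun _ _ => le_refl 0)
    have hanti := sir_anti_aux (f' := fun _ => (0:ℝ)) hVd (fun _ _ => le_refl 0)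
    intro t ht
    exact le_antisymm (hanti self_mem_Ici ht ht) (hm self_mem_Ici ht ht)
  -- the universal bound on I
  have hbound : ∀ t ≥ (0:ℝ), I t ≤ V 0 - a + a * Real.log a := by
    intro t ht
    have hVt := hVconst t ht
    have hSt := hSpos t ht
    -- a * (log (S t) - log a) ≤ S t - a
    have hlog : Real.log (S t / a) ≤ S t / a - 1 :=
      Real.log_le_sub_one_of_pos (by positivity)
    rw [Real.log_div (ne_of_gt hSt) (ne_of_gt hapos)] at hlog
    have key : a * (Real.log (S t) - Real.log a) ≤ S t - a := by
      have := mul_le_mul_of_nonneg_left hlog hapos.le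
      calc a * (Real.log (S t) - Real.log a) ≤ a * (S t / a - 1) := this
        _ = S t - a := by field_simp
    have : I t + S t - a * Real.log (S t) = V 0 := hVt
    nlinarith
  -- S reaches a at some finite time
  have hS0a : a ≤ S 0 := by
    rw [ha, div_le_iff₀ hR₀]
    rw [ge_iff_le, div_le_iff₀ hS0] at hcond
    linarith [mul_comm R₀ (S 0) ▸ hcond]
  have hreach : ∃ T ≥ (0:ℝ), S T ≤ a := by
    by_contra h
    push_neg at h
    -- I is monotone, so I ≥ I 0
    have hImono : MonotoneOn I (Set.Ici 0) := by
      apply sir_mono_aux hI'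
      intro t ht
      have hSt : a < S t := h t ht.le
      have hIt : 0 ≤ I t := hInn t ht.le
      have hγeq : γ = β * a := by rw [mul_comm]; exact haβ.symm
      rw [hγeq]
      nlinarith [mul_nonneg (mul_nonneg hβpos.le hIt) (sub_nonneg.2 hSt.le)]
    have hIge : ∀ t ≥ (0:ℝ), I 0 ≤ I t := fun t ht => hImono self_mem_Ici ht ht
    -- then S + β a I0 * t is antitone
    have hanti : AntitoneOn (fun t => S t + β * a * I 0 * t) (Set.Ici 0) := by
      apply sir_anti_aux (f' := fun t => -(γ * R₀ / N) * S t * I t + β * a * I 0)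
      · intro t ht
        exact (hS' t ht).add (((hasDerivAt_id t).const_mul (β * a * I 0)).congr_deriv
          (by ring))
      · intro t ht
        have h1 : a < S t := h t ht.le
        have h2 : I 0 ≤ I t := hIge t ht.le
        have h3 : 0 ≤ I t := hInn t ht.le
        have hprod : a * I 0 ≤ S t * I t := by
          nlinarith [mul_nonneg (sub_nonneg.2 h1.le) hI0.le,
            mul_nonneg (sub_nonneg.2 h2) (le_trans hapos.le h1.le)]
        nlinarith [mul_le_mul_of_nonneg_left hprod hβpos.le]
    set T : ℝ := (S 0 + 1) / (β * a * I 0) with hT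
    have hTpos : 0 < T := by positivity
    have := hanti self_mem_Ici (le_of_lt hTpos : (0:ℝ) ≤ T) hTpos.le
    simp only [mul_zero, add_zero] at this
    have hST : 0 ≤ S T := hSnn T hTpos.le
    have : β * a * I 0 * T = S 0 + 1 := by
      rw [hT]; field_simp
    nlinarith [hanti self_mem_Ici hTpos.le hTpos.le]
  obtain ⟨T, hT0, hTa⟩ := hreach
  -- IVT
  have hScont : ContinuousOn S (Set.Icc 0 T) := fun t ht =>
    (hS' t ht.1).continuousAt.continuousWithinAt
  have hmem : a ∈ Set.Icc (S T) (S 0) := ⟨hTa, hS0a⟩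
  obtain ⟨tstar, htmem, htS⟩ := intermediate_value_Icc' hT0 hScont hmem
  have htstar0 : (0:ℝ) ≤ tstar := htmem.1
  refine ⟨tstar, htstar0, ?_, ?_⟩
  · -- I tstar equals the bound
    have hVt := hVconst tstar htstar0
    have hIeq : I tstar = V 0 - a + a * Real.log a := by
      have : I tstar + S tstar - a * Real.log (S tstar) = V 0 := hVt
      rw [htS] at this
      linarith
    rw [hIeq]
    have hsum0 : S 0 + I 0 + R 0 = N := hsum 0 le_rfl
    have hlogdiv : Real.log (N / (R₀ * S 0)) = Real.log a - Real.log (S 0) := by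
      rw [← Real.log_div (ne_of_gt hapos) (ne_of_gt hS0)]
      congr 1
      rw [ha, div_div]
    have hV0 : V 0 = I 0 + S 0 - a * Real.log (S 0) := rfl
    rw [hlogdiv, hV0]
    linear_combination hsum0
  · intro t ht
    have h1 := hbound t ht
    have hVt := hVconst tstar htstar0
    have hIeq : I tstar = V 0 - a + a * Real.log a := by
      have : I tstar + S tstar - a * Real.log (S tstar) = V 0 := hVt
      rw [htS] at this
      linarith
    rw [hIeq]; exact h1
end

section
/- In the SIR model, the infected population tends to zero: I(t) → 0 as t → ∞. -/
open Filter

private lemma sir_monoAux {D : Set ℝ} (hD : Convex ℝ D) {f f' : ℝ → ℝ}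
    (hf : ∀ t ∈ D, HasDerivAt f (f' t) t) (h0 : ∀ t ∈ D, 0 ≤ f' t) :
    MonotoneOn f D := by
  apply monotoneOn_of_deriv_nonneg hD
  · exact fun t ht => (hf t ht).continuousAt.continuousWithinAt
  · exact fun t ht =>
      (hf t (interior_subset ht)).differentiableAt.differentiableWithinAt
  · intro t ht
    rw [(hf t (interior_subset ht)).deriv]
    exact h0 t (interior_subset ht)

/-- In the SIR model, the infected population tends to zero as t → ∞. -/
theorem sir_I_tendsto_zero
    (N γ R₀ : ℝ) (S I R : ℝ → ℝ)
    (hN : 0 < N) (hγ : 0 < γ) (hR₀ : 0 < R₀)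
    (hS' : ∀ t ≥ (0:ℝ), HasDerivAt S (-(γ * R₀ / N) * S t * I t) t)
    (hI' : ∀ t ≥ (0:ℝ), HasDerivAt I ((γ * R₀ / N) * S t * I t - γ * I t) t)
    (hR' : ∀ t ≥ (0:ℝ), HasDerivAt R (γ * I t) t)
    (hSnn : ∀ t ≥ (0:ℝ), 0 ≤ S t) (hInn : ∀ t ≥ (0:ℝ), 0 ≤ I t)
    (hRnn : ∀ t ≥ (0:ℝ), 0 ≤ R t)
    (hsum : ∀ t ≥ (0:ℝ), S t + I t + R t = N) :
    Tendsto I atTop (nhds 0) := by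
  -- basic bounds
  have hSle : ∀ t ≥ (0:ℝ), S t ≤ N := fun t ht => by
    have := hsum t ht; have := hInn t ht; have := hRnn t ht; linarith
  have hIle : ∀ t ≥ (0:ℝ), I t ≤ N := fun t ht => by
    have := hsum t ht; have := hSnn t ht; have := hRnn t ht; linarith
  have hRle : ∀ t ≥ (0:ℝ), R t ≤ N := fun t ht => by
    have := hsum t ht; have := hSnn t ht; have := hInn t ht; linarith
  set M : ℝ := γ * R₀ * N + γ * N with hMdef
  have hM : 0 < M := by positivity
  clear_value M
  -- bound on |I'|
  have hbound : ∀ t ≥ (0:ℝ),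
      |(γ * R₀ / N) * S t * I t - γ * I t| ≤ M := by
    intro t ht
    have h1 : S t * I t ≤ N * N :=
      mul_le_mul (hSle t ht) (hIle t ht) (hInn t ht) hN.le
    have h2 : (γ * R₀ / N) * S t * I t ≤ γ * R₀ * N := by
      have : (γ * R₀ / N) * (S t * I t) ≤ (γ * R₀ / N) * (N * N) :=
        mul_le_mul_of_nonneg_left h1 (by positivity)
      calc (γ * R₀ / N) * S t * I t = (γ * R₀ / N) * (S t * I t) := by ring
        _ ≤ (γ * R₀ / N) * (N * N) := this
        _ = γ * R₀ * N := by field_simp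
    have h3 : 0 ≤ (γ * R₀ / N) * S t * I t := by
      have := hSnn t ht; have := hInn t ht; positivity
    have h4 : γ * I t ≤ γ * N := mul_le_mul_of_nonneg_left (hIle t ht) hγ.le
    have h5 : 0 ≤ γ * I t := mul_nonneg hγ.le (hInn t ht)
    rw [abs_le]; constructor <;> linarith
  -- Lipschitz property of I on [0, ∞)
  have hLip : ∀ a ≥ (0:ℝ), ∀ b, a ≤ b → |I b - I a| ≤ M * (b - a) := by
    intro a ha b hab
    have hm1 : MonotoneOn (fun s => M * s - I s) (Set.Ici (0:ℝ)) := by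
      apply sir_monoAux (convex_Ici 0)
        (f' := fun s => M - ((γ * R₀ / N) * S s * I s - γ * I s))
      · intro t ht
        exact (((hasDerivAt_id' t).const_mul M).sub (hI' t ht)).congr_deriv (by ring)
      · intro t ht
        have := hbound t ht
        rw [abs_le] at this; linarith [this.2]
    have hm2 : MonotoneOn (fun s => M * s + I s) (Set.Ici (0:ℝ)) := by
      apply sir_monoAux (convex_Ici 0)
        (f' := fun s => M + ((γ * R₀ / N) * S s * I s - γ * I s))
      · intro t ht
        exact (((hasDerivAt_id' t).const_mul M).add (hI' t ht)).congr_deriv (by ring)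
      · intro t ht
        have := hbound t ht
        rw [abs_le] at this; linarith [this.1]
    have hb : b ∈ Set.Ici (0:ℝ) := le_trans ha hab
    have e1 := hm1 (Set.mem_Ici.2 ha) hb hab
    have e2 := hm2 (Set.mem_Ici.2 ha) hb hab
    simp only at e1 e2
    rw [abs_le]; constructor <;> linarith
  -- R is monotone on [0, ∞) and bounded, with supremum L
  have hRmono : MonotoneOn R (Set.Ici (0:ℝ)) := by
    apply sir_monoAux (convex_Ici 0) (f' := fun s => γ * I s) (fun t ht => hR' t ht)
    exact fun t ht => mul_nonneg hγ.le (hInn t ht)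
  have hbdd : BddAbove (R '' Set.Ici (0:ℝ)) :=
    ⟨N, by rintro x ⟨t, ht, rfl⟩; exact hRle t ht⟩
  set L : ℝ := sSup (R '' Set.Ici (0:ℝ)) with hLdef
  have hne : (R '' Set.Ici (0:ℝ)).Nonempty := ⟨R 0, 0, Set.mem_Ici.2 (le_refl 0), rfl⟩
  have hRleL : ∀ t ≥ (0:ℝ), R t ≤ L := fun t ht => le_csSup hbdd ⟨t, ht, rfl⟩
  clear_value L
  have hRnear : ∀ c > (0:ℝ), ∃ T ≥ (0:ℝ), ∀ s ≥ T, L - c < R s := by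
    intro c hc
    obtain ⟨x, ⟨t₀, ht₀, rfl⟩, hx⟩ := exists_lt_of_lt_csSup hne (show L - c < sSup (R '' Set.Ici 0) by rw [← hLdef]; linarith)
    exact ⟨t₀, ht₀, fun s hs =>
      lt_of_lt_of_le hx (hRmono ht₀ (le_trans ht₀ hs) hs)⟩
  -- main argument
  rw [Metric.tendsto_atTop]
  intro ε hε
  set δ : ℝ := ε / (2 * M) with hδdef
  have hδ : 0 < δ := by positivity
  have hMδ : M * δ = ε / 2 := by rw [hδdef]; field_simp
  clear_value δ
  set c : ℝ := γ * (ε / 2) * δ with hcdef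
  have hc : 0 < c := by positivity
  clear_value c
  obtain ⟨T, hT, hTnear⟩ := hRnear c hc
  refine ⟨T, fun t ht => ?_⟩
  have ht0 : (0:ℝ) ≤ t := le_trans hT ht
  rw [Real.dist_eq, sub_zero, abs_of_nonneg (hInn t ht0)]
  by_contra hcon
  push_neg at hcon
  -- I ≥ ε/2 on [t, t+δ]
  have hIhalf : ∀ s ∈ Set.Icc t (t + δ), ε / 2 ≤ I s := by
    intro s hs
    have h1 := hLip t ht0 s hs.1
    have h2 : M * (s - t) ≤ M * δ := by
      apply mul_le_mul_of_nonneg_left _ hM.le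
      linarith [hs.2]
    rw [abs_le] at h1
    obtain ⟨h1a, h1b⟩ := h1
    linarith [hMδ]
  -- R gains at least c over [t, t+δ]
  have hgain : MonotoneOn (fun s => R s - γ * (ε / 2) * s) (Set.Icc t (t + δ)) := by
    apply sir_monoAux (convex_Icc t (t + δ))
      (f' := fun s => γ * I s - γ * (ε / 2))
    · intro s hs
      exact ((hR' s (le_trans ht0 hs.1)).sub
        ((hasDerivAt_id' s).const_mul (γ * (ε / 2)))).congr_deriv (by ring)
    · intro s hs
      have := hIhalf s hs
      nlinarith
  have hmem1 : t ∈ Set.Icc t (t + δ) := ⟨le_refl t, by linarith⟩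
  have hmem2 : t + δ ∈ Set.Icc t (t + δ) := ⟨by linarith, le_refl _⟩
  have := hgain hmem1 hmem2 (by linarith)
  simp only at this
  have h1 : R t + c ≤ R (t + δ) := by
    rw [hcdef]; nlinarith
  have h2 : L - c < R t := hTnear t ht
  have h3 : R (t + δ) ≤ L := hRleL (t + δ) (by linarith)
  linarith
end

section
/- Let S₀ > 0, I₀ > 0, R₀c ≥ 0, set N = S₀ + I₀ + R₀c, and define g : (0,∞) → ℝ by g(r) = (N/r)·(ln(N/(r·S₀)) − 1) − R₀c + N. Then for every M with I₀ < M < S₀ + I₀ there exists a unique r* > N/S₀ such that g(r*) = M. -/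
/-- With S₀, I₀ > 0, R₀c ≥ 0, N = S₀ + I₀ + R₀c and
g(r) = (N/r)·(ln(N/(r·S₀)) − 1) − R₀c + N, for every M with I₀ < M < S₀ + I₀ there is
a unique r* > N/S₀ with g(r*) = M. -/
theorem critical_R0_exists_unique
    (S₀ I₀ R₀c N : ℝ) (hS₀ : 0 < S₀) (hI₀ : 0 < I₀) (hR₀c : 0 ≤ R₀c)
    (hNdef : N = S₀ + I₀ + R₀c)
    (g : ℝ → ℝ)
    (hg : ∀ r, g r = (N / r) * (Real.log (N / (r * S₀)) - 1) - R₀c + N) :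
    ∀ M : ℝ, I₀ < M → M < S₀ + I₀ → ∃! r : ℝ, N / S₀ < r ∧ g r = M := by
  intro M hM1 hM2
  have hN : 0 < N := by rw [hNdef]; linarith
  set φ : ℝ → ℝ := fun x => S₀ * (x * Real.log x - x) + (S₀ + I₀) with hφdef
  have hgφ : ∀ r : ℝ, 0 < r → g r = φ (N / (r * S₀)) := by
    intro r hr
    rw [hg, hφdef]
    simp only
    have h1 : S₀ * (N / (r * S₀)) = N / r := by field_simp
    linear_combination (1 - Real.log (N / (r * S₀))) * h1 + hNdef
  have hcont : Continuous φ := by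
    have h1 : Continuous fun x : ℝ => x * Real.log x := Real.continuous_mul_log
    fun_prop
  have hφ0 : φ 0 = S₀ + I₀ := by simp [hφdef]
  have hφ1 : φ 1 = I₀ := by simp [hφdef]
  -- strict antitone on [0,1]
  have hanti : StrictAntiOn φ (Set.Icc 0 1) := by
    apply strictAntiOn_of_deriv_neg (convex_Icc 0 1) hcont.continuousOn
    intro x hx
    rw [interior_Icc] at hx
    have hd : HasDerivAt φ (S₀ * Real.log x) x := by
      have h1 : HasDerivAt (fun y : ℝ => y * Real.log y) (Real.log x + 1) x :=
        Real.hasDerivAt_mul_log hx.1.ne'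
      have h2 : HasDerivAt (fun y : ℝ => y * Real.log y - y) (Real.log x + 1 - 1) x :=
        h1.sub (hasDerivAt_id x)
      have h3 := (h2.const_mul S₀).add_const (S₀ + I₀)
      rw [show S₀ * Real.log x = S₀ * (Real.log x + 1 - 1) by ring]
      exact h3
    rw [hd.deriv]
    exact mul_neg_of_pos_of_neg hS₀ (Real.log_neg hx.1 hx.2)
  -- existence of x ∈ (0,1) with φ x = M
  obtain ⟨x, hxIcc, hφx⟩ : ∃ x ∈ Set.Icc (0:ℝ) 1, φ x = M := by
    have := intermediate_value_Icc' (by norm_num : (0:ℝ) ≤ 1) hcont.continuousOn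
    have hmem : M ∈ Set.Icc (φ 1) (φ 0) := by
      rw [hφ0, hφ1]; exact ⟨le_of_lt hM1, le_of_lt hM2⟩
    exact this hmem
  have hx0 : 0 < x := by
    rcases lt_or_eq_of_le hxIcc.1 with h | h
    · exact h
    · exfalso; rw [← h, hφ0] at hφx; linarith
  have hx1 : x < 1 := by
    rcases lt_or_eq_of_le hxIcc.2 with h | h
    · exact h
    · exfalso; rw [h, hφ1] at hφx; linarith
  refine ⟨N / (S₀ * x), ⟨?_, ?_⟩, ?_⟩
  · exact div_lt_div_of_pos_left hN (by positivity) (by nlinarith)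
  · have hrpos : 0 < N / (S₀ * x) := by positivity
    rw [hgφ _ hrpos]
    have : N / (N / (S₀ * x) * S₀) = x := by field_simp
    rw [this, hφx]
  · rintro r' ⟨hr'1, hr'2⟩
    have hr'pos : 0 < r' := lt_trans (by positivity) hr'1
    set x' := N / (r' * S₀) with hx'def
    have hx'0 : 0 < x' := by positivity
    have hx'1 : x' < 1 := by
      rw [hx'def, div_lt_one (by positivity)]
      rw [div_lt_iff₀ hS₀] at hr'1
      linarith
    have hφx' : φ x' = M := by rw [← hgφ r' hr'pos]; exact hr'2
    have hxx : x' = x := by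
      apply hanti.injOn (Set.mem_Icc.2 ⟨le_of_lt hx'0, le_of_lt hx'1⟩)
        (Set.mem_Icc.2 ⟨le_of_lt hx0, le_of_lt hx1⟩)
      rw [hφx', hφx]
    have : x' = N / (r' * S₀) := hx'def
    rw [hxx] at this
    field_simp at this ⊢
    nlinarith [this]
end

section
/- Consider the SIR model with R₀ ≥ N/S(0) and a threshold M with I(0) < M < S(0) + I(0). If r* ≥ N/S(0) satisfies (N/r*)·(ln(N/(r*·S(0))) − 1) − R(0) + N = M, then I(t) ≤ M for all t ≥ 0 if and only if R₀ ≤ r*. -/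
open Set

lemma sir_mono_from_deriv {f f' : ℝ → ℝ} {a : ℝ}
    (hf : ∀ t ≥ a, HasDerivAt f (f' t) t) (h0 : ∀ t ≥ a, 0 ≤ f' t) :
    MonotoneOn f (Ici a) := by
  apply monotoneOn_of_deriv_nonneg (convex_Ici a)
  · exact fun t ht => (hf t ht).continuousAt.continuousWithinAt
  · intro t ht
    rw [interior_Ici] at ht
    exact (hf t ht.le).differentiableAt.differentiableWithinAt
  · intro t ht
    rw [interior_Ici] at ht
    rw [(hf t ht.le).deriv]
    exact h0 t ht.le

lemma sir_const_from_deriv {f : ℝ → ℝ} {a : ℝ}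
    (hf : ∀ t ≥ a, HasDerivAt f 0 t) :
    ∀ t ≥ a, f t = f a := by
  intro t ht
  have h1 := sir_mono_from_deriv (f' := fun _ => 0) hf (fun _ _ => le_refl 0)
  have h2 := sir_mono_from_deriv (f := fun s => -f s) (f' := fun _ => 0)
      (fun s hs => by have h := (hf s hs).neg; rw [neg_zero] at h; exact h) (fun _ _ => le_refl 0)
  have e1 := h1 (self_mem_Ici) (Set.mem_Ici.2 ht) ht
  have e2 := h2 (self_mem_Ici) (Set.mem_Ici.2 ht) ht
  simp only at e2
  linarith

lemma sir_peak_strictMono {N S0 : ℝ} (hN : 0 < N) (hS0 : 0 < S0) :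
    StrictMonoOn (fun r => N / r * (Real.log (N / (r * S0)) - 1)) (Ici (N / S0)) := by
  have hb : 0 < N / S0 := div_pos hN hS0
  set g : ℝ → ℝ := fun r => N * r⁻¹ * (Real.log N - Real.log r - Real.log S0 - 1) with hg
  have hEq : EqOn (fun r => N / r * (Real.log (N / (r * S0)) - 1)) g (Ici (N / S0)) := by
    intro r hr
    have hrpos : 0 < r := lt_of_lt_of_le hb hr
    simp only [hg, div_eq_mul_inv]
    rw [Real.log_mul (by positivity) (by simp [hrpos.ne', hS0.ne'])]
    rw [Real.log_inv, Real.log_mul hrpos.ne' hS0.ne']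
    ring
  have hd : ∀ r : ℝ, 0 < r → HasDerivAt g
      (N * (-(r^2)⁻¹) * (Real.log N - Real.log r - Real.log S0 - 1) + N * r⁻¹ * (-r⁻¹)) r := by
    intro r hr
    have h1 : HasDerivAt (fun r : ℝ => N * r⁻¹) (N * (-(r^2)⁻¹)) r :=
      (hasDerivAt_inv hr.ne').const_mul N
    have h2 : HasDerivAt (fun r : ℝ => Real.log N - Real.log r - Real.log S0 - 1) (-r⁻¹) r := by
      simpa using (((Real.hasDerivAt_log hr.ne').const_sub (Real.log N)).sub_const
        (Real.log S0)).sub_const 1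
    exact h1.mul h2
  have hmono : StrictMonoOn g (Ici (N / S0)) := by
    apply strictMonoOn_of_deriv_pos (convex_Ici _)
    · intro r hr
      have hrpos : 0 < r := lt_of_lt_of_le hb hr
      exact ((hd r hrpos).continuousAt).continuousWithinAt
    · intro r hr
      rw [interior_Ici] at hr
      have hrpos : 0 < r := hb.trans hr
      rw [(hd r hrpos).deriv]
      have hL : 0 < Real.log r + Real.log S0 - Real.log N := by
        have h1 : 1 < r * S0 / N := by
          rw [lt_div_iff₀ hN]
          have := (div_lt_iff₀ hS0).mp hr
          linarith
        have := Real.log_pos h1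
        rwa [Real.log_div (by positivity) hN.ne', Real.log_mul (hb.trans hr).ne' hS0.ne'] at this
      have hkey : N * (-(r^2)⁻¹) * (Real.log N - Real.log r - Real.log S0 - 1) + N * r⁻¹ * (-r⁻¹)
          = N * (r^2)⁻¹ * (Real.log r + Real.log S0 - Real.log N) := by
        field_simp
        ring
      rw [hkey]
      positivity
  exact fun a ha b hb' hab => by
    rw [hEq ha, hEq hb']; exact hmono ha hb' hab

/-- In the SIR model with R₀ ≥ N/S(0) and I(0) < M < S(0) + I(0), if
r* ≥ N/S(0) satisfies (N/r*)·(ln(N/(r*·S(0))) − 1) − R(0) + N = M, then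
I(t) ≤ M for all t ≥ 0 if and only if R₀ ≤ r*. -/
theorem sir_threshold_iff_R0_le_critical
    (N γ R₀ M rstar : ℝ) (S I R : ℝ → ℝ)
    (hN : 0 < N) (hγ : 0 < γ) (hR₀ : 0 < R₀)
    (hS' : ∀ t ≥ (0:ℝ), HasDerivAt S (-(γ * R₀ / N) * S t * I t) t)
    (hI' : ∀ t ≥ (0:ℝ), HasDerivAt I ((γ * R₀ / N) * S t * I t - γ * I t) t)
    (hR' : ∀ t ≥ (0:ℝ), HasDerivAt R (γ * I t) t)
    (hSnn : ∀ t ≥ (0:ℝ), 0 ≤ S t) (hInn : ∀ t ≥ (0:ℝ), 0 ≤ I t)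
    (hRnn : ∀ t ≥ (0:ℝ), 0 ≤ R t)
    (hsum : ∀ t ≥ (0:ℝ), S t + I t + R t = N)
    (hS0 : 0 < S 0) (hI0 : 0 < I 0)
    (hR₀ge : R₀ ≥ N / S 0)
    (hM₁ : I 0 < M) (hM₂ : M < S 0 + I 0)
    (hrstar : rstar ≥ N / S 0)
    (hrstarEq : (N / rstar) * (Real.log (N / (rstar * S 0)) - 1) - R 0 + N = M) :
    (∀ t ≥ (0:ℝ), I t ≤ M) ↔ R₀ ≤ rstar := by
  set c : ℝ := N / R₀ with hc
  have hcpos : 0 < c := div_pos hN hR₀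
  have hIleN : ∀ t ≥ (0:ℝ), I t ≤ N := fun t ht => by
    have := hsum t ht; have := hSnn t ht; have := hRnn t ht; linarith
  -- Step 1: positivity of S
  have hSpos : ∀ t ≥ (0:ℝ), 0 < S t := by
    intro t ht
    have hG : ∀ u ≥ (0:ℝ), HasDerivAt (fun u => S u * Real.exp (γ * R₀ * u))
        ((-(γ * R₀ / N) * S u * I u) * Real.exp (γ * R₀ * u)
          + S u * (Real.exp (γ * R₀ * u) * (γ * R₀))) u := by
      intro u hu
      have he : HasDerivAt (fun u : ℝ => Real.exp (γ * R₀ * u))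
          (Real.exp (γ * R₀ * u) * (γ * R₀)) u := by
        simpa [mul_comm] using ((hasDerivAt_id u).const_mul (γ * R₀)).exp
      exact (hS' u hu).mul he
    have hmono := sir_mono_from_deriv hG (by
      intro u hu
      have h1 := hSnn u hu
      have h2 := hInn u hu
      have h3 := hIleN u hu
      have he := Real.exp_pos (γ * R₀ * u)
      have key : -(γ * R₀ / N) * S u * I u + S u * (γ * R₀) =
          (γ * R₀ / N) * S u * (N - I u) := by
            have hN' : γ * R₀ / N * N = γ * R₀ := div_mul_cancel₀ _ hN.ne'
            linear_combination (-(S u)) * hN'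
      nlinarith [mul_nonneg (mul_nonneg (le_of_lt (by positivity : (0:ℝ) < γ * R₀ / N)) h1)
        (sub_nonneg.2 h3), he.le])
    have := hmono (self_mem_Ici) (mem_Ici.2 ht) ht
    simp only [mul_zero, Real.exp_zero, mul_one] at this
    have hexp := Real.exp_pos (γ * R₀ * t)
    nlinarith
  -- Step 2: conserved quantity
  have hW : ∀ t ≥ (0:ℝ), I t + S t - c * Real.log (S t) = I 0 + S 0 - c * Real.log (S 0) := by
    apply sir_const_from_deriv
    intro t ht
    have hSne := (hSpos t ht).ne'
    have h1 := ((hI' t ht).add (hS' t ht)).sub (((hS' t ht).log hSne).const_mul c)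
    have : (γ * R₀ / N * S t * I t - γ * I t + -(γ * R₀ / N) * S t * I t)
        - c * (-(γ * R₀ / N) * S t * I t / S t) = 0 := by
      field_simp [hc, hR₀.ne', hN.ne', hSne]
      have hcR : R₀ * R₀⁻¹ = 1 := mul_inv_cancel₀ hR₀.ne'
      linear_combination (γ * I t * N) * hcR
    rw [this] at h1
    exact h1
  -- Peak value algebra
  have hpk : I 0 + S 0 - c * Real.log (S 0) - c + c * Real.log c
      = N / R₀ * (Real.log (N / (R₀ * S 0)) - 1) - R 0 + N := by
    have hs0 : S 0 + I 0 + R 0 = N := hsum 0 le_rfl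
    have h1 : Real.log (N / (R₀ * S 0)) = Real.log c - Real.log (S 0) := by
      rw [← Real.log_div hcpos.ne' hS0.ne', hc, div_div]
    rw [h1, hc]
    linear_combination hs0
  -- Step 3: pointwise bound
  have hbound : ∀ t ≥ (0:ℝ), I t ≤ N / R₀ * (Real.log (N / (R₀ * S 0)) - 1) - R 0 + N := by
    intro t ht
    have hw := hW t ht
    have hSt := hSpos t ht
    have hlog : c * Real.log (S t) - S t ≤ c * Real.log c - c := by
      have h2 : Real.log (S t / c) ≤ S t / c - 1 :=
        Real.log_le_sub_one_of_pos (div_pos hSt hcpos)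
      rw [Real.log_div hSt.ne' hcpos.ne'] at h2
      have h5 := mul_le_mul_of_nonneg_left h2 hcpos.le
      have h4 : c * (S t / c - 1) = S t - c := by field_simp
      rw [h4, mul_sub] at h5
      linarith
    rw [← hpk]
    linarith
  -- Step 4: the peak value is attained
  have hattain : ∃ ts ≥ (0:ℝ), I ts = N / R₀ * (Real.log (N / (R₀ * S 0)) - 1) - R 0 + N := by
    have hT : ∃ T ≥ (0:ℝ), S T ≤ c := by
      by_contra hcon
      push_neg at hcon
      have hImono := sir_mono_from_deriv hI' (by
        intro u hu
        have hcS : c ≤ S u := (hcon u hu).le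
        have hkey : γ ≤ γ * R₀ / N * S u := by
          have hcc : γ * R₀ / N * c = γ := by
            rw [hc]; field_simp
          nlinarith [(by positivity : (0:ℝ) < γ * R₀ / N)]
        nlinarith [hInn u hu])
      have hIge : ∀ u ≥ (0:ℝ), I 0 ≤ I u :=
        fun u hu => hImono self_mem_Ici (mem_Ici.2 hu) hu
      have hH := sir_mono_from_deriv (f := fun u => R u - γ * I 0 * u)
          (f' := fun u => γ * I u - γ * I 0)
          (fun u hu => by
            exact ((hR' u hu).sub ((hasDerivAt_id u).const_mul (γ * I 0))).congr_deriv (by ring))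
          (fun u hu => by show 0 ≤ γ * I u - γ * I 0; have := hIge u hu; nlinarith)
      set T := (N + 1) / (γ * I 0) with hTdef
      have hTpos : 0 < T := by positivity
      have hmT := hH self_mem_Ici (mem_Ici.2 hTpos.le) hTpos.le
      simp only [mul_zero, sub_zero] at hmT
      have hgT : γ * I 0 * T = N + 1 := by
        rw [hTdef]; field_simp
      have hRT := hsum T hTpos.le
      have hST := hSnn T hTpos.le
      have hIT := hInn T hTpos.le
      have hR0 := hRnn 0 le_rfl
      linarith
    obtain ⟨T, hT0, hTle⟩ := hT
    have hcS0 : c ≤ S 0 := by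
      have h1 : N ≤ R₀ * S 0 := (div_le_iff₀ hS0).mp hR₀ge
      rw [hc, div_le_iff₀ hR₀, mul_comm]
      exact h1
    have hcont : ContinuousOn S (Icc 0 T) :=
      fun u hu => (hS' u hu.1).continuousAt.continuousWithinAt
    have hivt := intermediate_value_Icc' hT0 hcont
    obtain ⟨ts, hts, hSts⟩ := hivt ⟨hTle, hcS0⟩
    refine ⟨ts, hts.1, ?_⟩
    have hw := hW ts hts.1
    rw [hSts] at hw
    rw [← hpk]
    linarith
  have hsm := sir_peak_strictMono hN hS0
  constructor
  · intro hIM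
    obtain ⟨ts, hts0, hIts⟩ := hattain
    have h1 : N / R₀ * (Real.log (N / (R₀ * S 0)) - 1) - R 0 + N ≤ M := hIts ▸ hIM ts hts0
    by_contra hgt
    push_neg at hgt
    have h2 := hsm (mem_Ici.2 hrstar) (mem_Ici.2 hR₀ge) hgt
    simp only at h2
    linarith
  · intro hle t ht
    have h1 := hbound t ht
    have h2 : N / R₀ * (Real.log (N / (R₀ * S 0)) - 1)
        ≤ N / rstar * (Real.log (N / (rstar * S 0)) - 1) :=
      hsm.monotoneOn (mem_Ici.2 hR₀ge) (mem_Ici.2 hrstar) hle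
    linarith
end

section
/- Let S₀ > 0, I₀ > 0, R₀c ≥ 0, set N = S₀ + I₀ + R₀c, and let M satisfy I₀ < M < S₀ + I₀. If r* > N/S₀ satisfies (N/r*)·(ln(N/(r*·S₀)) − 1) − R₀c + N = M, then v := N/(r*·S₀) is the unique solution in the interval (0,1) of the equation v·ln(v) = v + (M + R₀c − N)/S₀. -/
/-- With S₀, I₀ > 0, R₀c ≥ 0, N = S₀ + I₀ + R₀c and I₀ < M < S₀ + I₀,
if r* > N/S₀ satisfies (N/r*)·(ln(N/(r*·S₀)) − 1) − R₀c + N = M, then v = N/(r*·S₀)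
is the unique solution in (0,1) of v·ln(v) = v + (M + R₀c − N)/S₀. -/
theorem critical_v_unique_in_unit_interval
    (S₀ I₀ R₀c N M rstar : ℝ)
    (hS₀ : 0 < S₀) (hI₀ : 0 < I₀) (hR₀c : 0 ≤ R₀c)
    (hNdef : N = S₀ + I₀ + R₀c)
    (hM₁ : I₀ < M) (hM₂ : M < S₀ + I₀)
    (hrstar : N / S₀ < rstar)
    (hrstarEq : (N / rstar) * (Real.log (N / (rstar * S₀)) - 1) - R₀c + N = M) :
    (0 < N / (rstar * S₀) ∧ N / (rstar * S₀) < 1) ∧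
    (N / (rstar * S₀)) * Real.log (N / (rstar * S₀))
      = N / (rstar * S₀) + (M + R₀c - N) / S₀ ∧
    ∀ w : ℝ, 0 < w → w < 1 →
      w * Real.log w = w + (M + R₀c - N) / S₀ → w = N / (rstar * S₀) := by
  have hN : 0 < N := by nlinarith
  have hrs : 0 < rstar := lt_trans (div_pos hN hS₀) hrstar
  have hrsS : N < rstar * S₀ := (div_lt_iff₀ hS₀).mp hrstar
  have hrsS0 : 0 < rstar * S₀ := lt_trans hN hrsS
  set v := N / (rstar * S₀) with hv
  have hv0 : 0 < v := div_pos hN hrsS0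
  have hv1 : v < 1 := (div_lt_one hrsS0).mpr hrsS
  have h1 : N / rstar = v * S₀ := by
    rw [hv]; field_simp
  have heq : v * Real.log v = v + (M + R₀c - N) / S₀ := by
    rw [h1] at hrstarEq
    field_simp
    nlinarith [hrstarEq]
  refine ⟨⟨hv0, hv1⟩, heq, ?_⟩
  intro w hw0 hw1 hweq
  have hanti : StrictAntiOn (fun x => x * Real.log x - x) (Set.Ioo 0 1) := by
    apply strictAntiOn_of_deriv_neg (convex_Ioo 0 1)
    · exact (continuous_id.continuousOn.mul (Real.continuousOn_log.mono
        (by intro x hx; exact ne_of_gt hx.1))).sub continuous_id.continuousOn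
    · intro x hx
      rw [interior_Ioo] at hx
      have hx0 : x ≠ 0 := ne_of_gt hx.1
      have hd : HasDerivAt (fun x => x * Real.log x - x) (Real.log x) x := by
        have h := ((hasDerivAt_id x).mul (Real.hasDerivAt_log hx0)).sub (hasDerivAt_id x)
        rw [show (1:ℝ) * Real.log x + id x * x⁻¹ - 1 = Real.log x by simp [hx0]] at h
        exact h
      rw [hd.deriv]
      exact Real.log_neg hx.1 hx.2
  have hfw : w * Real.log w - w = v * Real.log v - v := by
    rw [heq, hweq]; ring
  exact hanti.injOn ⟨hw0, hw1⟩ ⟨hv0, hv1⟩ hfw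
end

section
/- Let N, R₀, x₀ > 0 and M a real number with 0 < M ≤ N, and define f : (0,∞) → ℝ by f(u) = (N/R₀)·ln(u) − x₀·u + N. If M < (N/R₀)·(ln(N/(R₀·x₀)) − 1) + N, then the equation f(u) = M has exactly two solutions u > 0; if M > (N/R₀)·(ln(N/(R₀·x₀)) − 1) + N, then f(u) = M has no solution u > 0. -/
-- strict increase on (0, c/x₀]
lemma sir_mono {c x₀ : ℝ} (hc : 0 < c) (hx : 0 < x₀) {a b : ℝ}
    (ha : 0 < a) (hab : a < b) (hb : b ≤ c / x₀) :
    c * Real.log a - x₀ * a < c * Real.log b - x₀ * b := by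
  have hb0 : 0 < b := ha.trans hab
  have hL : Real.log (a / b) < a / b - 1 :=
    Real.log_lt_sub_one_of_pos (div_pos ha hb0) (by
      intro h
      have : a = b := by field_simp at h; linarith
      linarith)
  rw [Real.log_div (ne_of_gt ha) (ne_of_gt hb0)] at hL
  have hL' : b * (Real.log a - Real.log b) < a - b := by
    have := mul_lt_mul_of_pos_left hL hb0
    have hb' : b * (a / b - 1) = a - b := by field_simp
    linarith [this, hb'.le, hb'.ge]
  have hxb : x₀ * b ≤ c := by
    rw [le_div_iff₀ hx] at hb; linarith [hb]
  have h1 : c * (b * (Real.log a - Real.log b)) < c * (a - b) :=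
    mul_lt_mul_of_pos_left hL' hc
  have h2 : c * (a - b) ≤ x₀ * b * (a - b) := by
    have h3 : a - b ≤ 0 := by linarith
    nlinarith
  nlinarith [hb0]

-- strict decrease on [c/x₀, ∞)
lemma sir_anti {c x₀ : ℝ} (hc : 0 < c) (hx : 0 < x₀) {a b : ℝ}
    (ha : c / x₀ ≤ a) (hab : a < b) :
    c * Real.log b - x₀ * b < c * Real.log a - x₀ * a := by
  have ha0 : 0 < a := lt_of_lt_of_le (div_pos hc hx) ha
  have hb0 : 0 < b := ha0.trans hab
  have hL : Real.log (b / a) < b / a - 1 :=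
    Real.log_lt_sub_one_of_pos (div_pos hb0 ha0) (by
      intro h
      have : b = a := by field_simp at h; linarith
      linarith)
  rw [Real.log_div (ne_of_gt hb0) (ne_of_gt ha0)] at hL
  have hL' : a * (Real.log b - Real.log a) < b - a := by
    have := mul_lt_mul_of_pos_left hL ha0
    have ha' : a * (b / a - 1) = b - a := by field_simp
    linarith [this, ha'.le, ha'.ge]
  have hxa : c ≤ x₀ * a := by
    rw [div_le_iff₀ hx] at ha; linarith [ha]
  have h1 : c * (a * (Real.log b - Real.log a)) < c * (b - a) :=
    mul_lt_mul_of_pos_left hL' hc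
  have h2 : c * (b - a) ≤ x₀ * a * (b - a) := by nlinarith
  nlinarith [ha0]

-- strict max at c/x₀
lemma sir_max {c x₀ : ℝ} (hc : 0 < c) (hx : 0 < x₀) {u : ℝ}
    (hu : 0 < u) (hne : u ≠ c / x₀) :
    c * Real.log u - x₀ * u < c * Real.log (c / x₀) - x₀ * (c / x₀) := by
  rcases lt_or_gt_of_ne hne with h | h
  · exact sir_mono hc hx hu h le_rfl
  · exact sir_anti hc hx le_rfl h

/-- For N, R₀, x₀ > 0, 0 < M ≤ N, and f(u) = (N/R₀)·ln(u) − x₀·u + N: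
if M < (N/R₀)·(ln(N/(R₀·x₀)) − 1) + N then f(u) = M has exactly two solutions u > 0;
if M > (N/R₀)·(ln(N/(R₀·x₀)) − 1) + N then f(u) = M has no solution u > 0. -/
theorem parametric_I_equals_M_solutions
    (N R₀ x₀ M : ℝ) (hN : 0 < N) (hR₀ : 0 < R₀) (hx₀ : 0 < x₀)
    (hM : 0 < M) (hMN : M ≤ N)
    (f : ℝ → ℝ) (hf : ∀ u, f u = (N / R₀) * Real.log u - x₀ * u + N) :
    (M < (N / R₀) * (Real.log (N / (R₀ * x₀)) - 1) + N →
      ∃ u₁ u₂ : ℝ, 0 < u₁ ∧ 0 < u₂ ∧ u₁ ≠ u₂ ∧ f u₁ = M ∧ f u₂ = M ∧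
        ∀ u : ℝ, 0 < u → f u = M → u = u₁ ∨ u = u₂) ∧
    ((N / R₀) * (Real.log (N / (R₀ * x₀)) - 1) + N < M →
      ∀ u : ℝ, 0 < u → f u ≠ M) := by
  set c := N / R₀ with hcdef
  have hc : 0 < c := div_pos hN hR₀
  set s := c / x₀ with hsdef
  have hs : 0 < s := div_pos hc hx₀
  have hxs : x₀ * s = c := by rw [hsdef]; field_simp
  have hlogs : Real.log (N / (R₀ * x₀)) = Real.log s := by
    rw [hsdef, hcdef, div_div]
  -- the peak value equals f s
  have hpeak : c * (Real.log s - 1) + N = f s := by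
    rw [hf s, ← hxs]; ring
  -- continuity
  have hcont : ∀ p q : ℝ, 0 < p → ContinuousOn f (Set.Icc p q) := by
    intro p q hp
    have : ContinuousOn (fun u : ℝ => c * Real.log u - x₀ * u + N) (Set.Icc p q) := by
      apply ContinuousOn.add
      · apply ContinuousOn.sub
        · exact continuousOn_const.mul (ContinuousOn.log continuousOn_id
            (fun x hx => ne_of_gt (lt_of_lt_of_le hp hx.1)))
        · exact (continuous_const.mul continuous_id).continuousOn
      · exact continuousOn_const
    exact this.congr (fun x _ => hf x)
  constructor
  · -- two solutions
    intro hM1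
    rw [hlogs, hpeak] at hM1
    -- small point a
    set a := min (s / 2) (Real.exp ((M - N) / c - 1)) with hadef
    have ha0 : 0 < a := lt_min (by linarith) (Real.exp_pos _)
    have has : a < s := lt_of_le_of_lt (min_le_left _ _) (by linarith)
    have haM : f a < M := by
      have hla : Real.log a ≤ (M - N) / c - 1 := by
        calc Real.log a ≤ Real.log (Real.exp ((M - N) / c - 1)) :=
              Real.log_le_log ha0 (min_le_right _ _)
          _ = (M - N) / c - 1 := Real.log_exp _
      have : c * Real.log a ≤ M - N - c := by
        have := mul_le_mul_of_nonneg_left hla hc.le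
        have hcc : c * ((M - N) / c - 1) = M - N - c := by field_simp
        linarith
      rw [hf a]
      nlinarith [mul_pos hx₀ ha0]
    -- large point b
    set t := max (s + 1) ((2 * c + N - M + 1) / x₀) with htdef
    have hts : s + 1 ≤ t := le_max_left _ _
    have ht1 : 1 ≤ t := by linarith
    have ht0 : 0 < t := by linarith
    set b := t ^ 2 with hbdef
    have hsb : s < b := by nlinarith
    have hbM : f b < M := by
      have hlt : Real.log t ≤ t - 1 := Real.log_le_sub_one_of_pos ht0
      have hlb : Real.log b = 2 * Real.log t := by
        rw [hbdef, Real.log_pow]; push_cast; ring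
      have hxt : 2 * c + N - M + 1 ≤ x₀ * t := by
        have := le_max_right (s + 1) ((2 * c + N - M + 1) / x₀)
        rw [div_le_iff₀ hx₀] at this
        linarith
      rw [hf b, hlb]
      nlinarith [mul_le_mul_of_nonneg_left hlt (by linarith : (0:ℝ) ≤ 2 * c),
        mul_le_mul_of_nonneg_left hxt ht0.le, sq_nonneg t]
    -- IVT on [a, s]
    obtain ⟨u₁, hu₁mem, hu₁⟩ := intermediate_value_Ioo has.le (hcont a s ha0)
      (Set.mem_Ioo.mpr ⟨haM, hM1⟩)
    obtain ⟨u₂, hu₂mem, hu₂⟩ := intermediate_value_Ioo' hsb.le (hcont s b hs)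
      (Set.mem_Ioo.mpr ⟨hbM, hM1⟩)
    have hu₁0 : 0 < u₁ := ha0.trans hu₁mem.1
    have hu₁s : u₁ < s := hu₁mem.2
    have hu₂s : s < u₂ := hu₂mem.1
    have hu₂0 : 0 < u₂ := hs.trans hu₂s
    refine ⟨u₁, u₂, hu₁0, hu₂0, ne_of_lt (hu₁s.trans hu₂s), hu₁, hu₂, ?_⟩
    intro u hu hfu
    have hmax : ∀ v : ℝ, 0 < v → f v = M → v ≠ s := by
      intro v hv hfv hvs
      rw [hvs] at hfv; linarith [hfv]
    have key : ∀ v w : ℝ, 0 < v → 0 < w → v < s → w < s → f v = M → f w = M → v = w := by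
      intro v w hv hw hvs hws hfv hfw
      rcases lt_trichotomy v w with h | h | h
      · exfalso
        have := sir_mono hc hx₀ hv h hws.le
        rw [hf v] at hfv; rw [hf w] at hfw; linarith
      · exact h
      · exfalso
        have := sir_mono hc hx₀ hw h hvs.le
        rw [hf v] at hfv; rw [hf w] at hfw; linarith
    have key2 : ∀ v w : ℝ, s < v → s < w → f v = M → f w = M → v = w := by
      intro v w hvs hws hfv hfw
      rcases lt_trichotomy v w with h | h | h
      · exfalso
        have := sir_anti hc hx₀ hvs.le h
        rw [hf v] at hfv; rw [hf w] at hfw; linarith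
      · exact h
      · exfalso
        have := sir_anti hc hx₀ hws.le h
        rw [hf v] at hfv; rw [hf w] at hfw; linarith
    rcases lt_trichotomy u s with h | h | h
    · exact Or.inl (key u u₁ hu hu₁0 h hu₁s hfu hu₁)
    · exact absurd h (hmax u hu hfu)
    · exact Or.inr (key2 u u₂ h hu₂s hfu hu₂)
  · -- no solutions
    intro hM2 u hu hfu
    rw [hlogs, hpeak] at hM2
    rcases eq_or_ne u s with h | h
    · rw [h] at hfu; linarith
    · have := sir_max hc hx₀ hu (by rwa [← hsdef])
      rw [hf u] at hfu
      rw [hf s] at hM2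
      linarith [hfu, this]
end

section
/- Let a, b be real numbers with b ≠ 0, and consider the equation v·ln(v) = a·v + b for v > 0. If b·e^(1−a) < −1, the equation has no solution. If −1 < b·e^(1−a) < 0, it has exactly two solutions. If b·e^(1−a) = −1 or b·e^(−a) > 0, it has exactly one solution. -/
noncomputable def gAux (u : ℝ) : ℝ := u * Real.log u - u

lemma gAux_one : gAux 1 = -1 := by simp [gAux]

lemma gAux_deriv (x : ℝ) (hx : x ≠ 0) : deriv gAux x = Real.log x := by
  have h := (Real.hasDerivAt_mul_log hx).sub (hasDerivAt_id x)
  have hg : gAux = (fun x => x * Real.log x) - id := by funext u; rfl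
  rw [hg]; simpa using h.deriv

lemma gAux_cont : Continuous gAux := Real.continuous_mul_log.sub continuous_id

lemma gAux_mono : StrictMonoOn gAux (Set.Ici 1) := by
  apply strictMonoOn_of_deriv_pos (convex_Ici 1) gAux_cont.continuousOn
  intro x hx
  rw [interior_Ici] at hx
  rw [gAux_deriv x (zero_lt_one.trans hx).ne']
  exact Real.log_pos hx

lemma gAux_anti : StrictAntiOn gAux (Set.Ioc 0 1) := by
  apply strictAntiOn_of_deriv_neg (convex_Ioc 0 1) gAux_cont.continuousOn
  intro x hx
  rw [interior_Ioc] at hx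
  rw [gAux_deriv x hx.1.ne']
  exact Real.log_neg hx.1 hx.2

lemma gAux_ge (u : ℝ) (hu : 0 < u) : -1 ≤ gAux u := by
  have h := Real.log_le_sub_one_of_pos (x := u⁻¹) (by positivity)
  rw [Real.log_inv] at h
  have : 1 - u⁻¹ ≤ Real.log u := by linarith
  have h2 : u * (1 - u⁻¹) ≤ u * Real.log u :=
    mul_le_mul_of_nonneg_left this hu.le
  have h3 : u * (1 - u⁻¹) = u - 1 := by field_simp
  simp only [gAux]; nlinarith

lemma gAux_neg (u : ℝ) (hu : 0 < u) (hu1 : u ≤ 1) : gAux u < 0 := by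
  have h := Real.log_nonpos hu.le hu1
  have : u * Real.log u ≤ 0 := mul_nonpos_of_nonneg_of_nonpos hu.le h
  simp only [gAux]; linarith

lemma gAux_gt (u : ℝ) (hu : 0 < u) (hu1 : u ≠ 1) : -1 < gAux u := by
  rcases lt_or_gt_of_ne hu1 with h | h
  · have := gAux_anti (Set.mem_Ioc.2 ⟨hu, h.le⟩) (Set.mem_Ioc.2 ⟨one_pos, le_refl 1⟩) h
    rwa [gAux_one] at this
  · have := gAux_mono (Set.mem_Ici.2 (le_refl 1)) (Set.mem_Ici.2 h.le) h
    rwa [gAux_one] at this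

lemma gAux_exists_ge (c : ℝ) (hc : -1 ≤ c) : ∃ u, 1 ≤ u ∧ gAux u = c := by
  set m : ℝ := max 2 (c + 1) with hm
  have hm2 : 2 ≤ m := le_max_left _ _
  have hmc : c + 1 ≤ m := le_max_right _ _
  set M : ℝ := Real.exp m with hM
  have hM1 : 1 ≤ M := Real.one_le_exp (by linarith)
  have hgM : c ≤ gAux M := by
    have : gAux M = M * (m - 1) := by
      simp only [gAux, hM, Real.log_exp]; ring
    rw [this]; nlinarith
  have hsub := intermediate_value_Icc hM1 gAux_cont.continuousOn
  obtain ⟨u, hu, hgu⟩ := hsub (Set.mem_Icc.2 ⟨by rw [gAux_one]; exact hc, hgM⟩)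
  exact ⟨u, hu.1, hgu⟩

lemma gAux_exists_small (c : ℝ) (hc1 : -1 < c) (hc0 : c < 0) :
    ∃ u, 0 < u ∧ u < 1 ∧ gAux u = c := by
  set ε : ℝ := min (c ^ 2 / 8) (1 / 2) with hε
  have hc2 : 0 < c ^ 2 := by nlinarith
  have hε0 : 0 < ε := lt_min (by positivity) (by norm_num)
  have hε1 : ε ≤ 1 := (min_le_right _ _).trans (by norm_num)
  set s : ℝ := Real.sqrt ε with hs
  have hs0 : 0 < s := Real.sqrt_pos.2 hε0
  have hs2 : s * s = ε := Real.mul_self_sqrt hε0.le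
  have hsc : 2 * s < -c := by
    have h4 : 4 * (s * s) ≤ c ^ 2 / 2 := by
      have := min_le_left (c ^ 2 / 8) (1 / 2)
      rw [hs2]; linarith
    nlinarith
  have hlog : Real.log s ≥ 1 - 1 / s := by
    have h := Real.log_le_sub_one_of_pos (x := s⁻¹) (by positivity)
    rw [Real.log_inv] at h
    have : s⁻¹ - 1 = 1 / s - 1 := by field_simp
    linarith [this ▸ h]
  have hgε : c ≤ gAux ε := by
    have hlε : Real.log ε = Real.log s + Real.log s := by
      rw [← hs2, Real.log_mul hs0.ne' hs0.ne']
    have hεs : ε / s = s := by rw [← hs2]; field_simp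
    have h1 : ε * Real.log ε ≥ 2 * ε - 2 * s := by
      have h2 : ε * Real.log ε = 2 * ε * Real.log s := by rw [hlε]; ring
      have h3 : 2 * ε * Real.log s ≥ 2 * ε * (1 - 1 / s) :=
        mul_le_mul_of_nonneg_left hlog (by positivity)
      have h4 : 2 * ε * (1 - 1 / s) = 2 * ε - 2 * s := by
        have he : 2 * ε * (1 - 1 / s) = 2 * ε - 2 * (ε / s) := by
          field_simp
        rw [he, hεs]
      linarith
    simp only [gAux]; linarith
  have hsub := intermediate_value_Icc' hε1 gAux_cont.continuousOn
  obtain ⟨u, hu, hgu⟩ := hsub (Set.mem_Icc.2 ⟨by rw [gAux_one]; exact hc1.le, hgε⟩)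
  refine ⟨u, hε0.trans_le hu.1, lt_of_le_of_ne hu.2 ?_, hgu⟩
  intro h; rw [h, gAux_one] at hgu; linarith
lemma keyAux (a b v : ℝ) (hv : 0 < v) :
    v * Real.log v = a * v + b ↔
      gAux (v * Real.exp (1 - a)) = b * Real.exp (1 - a) := by
  set E := Real.exp (1 - a) with hEdef
  have hE : 0 < E := Real.exp_pos _
  have h1 : gAux (v * E) = E * (v * Real.log v - a * v) := by
    simp only [gAux, Real.log_mul hv.ne' hE.ne', hEdef, Real.log_mul hv.ne' (Real.exp_pos _).ne', Real.log_exp]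
    ring
  rw [h1]
  constructor
  · intro h
    rw [show v * Real.log v - a * v = b from by linarith]; ring
  · intro h
    have h2 : E * (v * Real.log v - a * v) = E * b := by linarith
    have := mul_left_cancel₀ hE.ne' h2
    linarith

/-- For b ≠ 0, solutions v > 0 of v·ln(v) = a·v + b: none if
b·e^(1−a) < −1; exactly two if −1 < b·e^(1−a) < 0; exactly one if b·e^(1−a) = −1 or
b·e^(−a) > 0. -/
theorem vlogv_eq_linear_solution_count (a b : ℝ) (hb : b ≠ 0) :
    (b * Real.exp (1 - a) < -1 →
      ¬∃ v : ℝ, 0 < v ∧ v * Real.log v = a * v + b) ∧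
    (-1 < b * Real.exp (1 - a) → b * Real.exp (1 - a) < 0 →
      ∃ v₁ v₂ : ℝ, 0 < v₁ ∧ 0 < v₂ ∧ v₁ ≠ v₂ ∧
        v₁ * Real.log v₁ = a * v₁ + b ∧ v₂ * Real.log v₂ = a * v₂ + b ∧
        ∀ v : ℝ, 0 < v → v * Real.log v = a * v + b → v = v₁ ∨ v = v₂) ∧
    (b * Real.exp (1 - a) = -1 ∨ 0 < b * Real.exp (-a) →
      ∃! v : ℝ, 0 < v ∧ v * Real.log v = a * v + b) := by
  set E := Real.exp (1 - a) with hEdef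
  have hE : 0 < E := Real.exp_pos _
  set F := Real.exp (a - 1) with hFdef
  have hF : 0 < F := Real.exp_pos _
  have hFE : F * E = 1 := by
    rw [hFdef, hEdef, ← Real.exp_add]; norm_num
  set c := b * E with hcdef
  refine ⟨?_, ?_, ?_⟩
  -- Part 1: no solution
  · rintro hc ⟨v, hv, heq⟩
    have hg := (keyAux a b v hv).1 heq
    have := gAux_ge (v * E) (by positivity)
    linarith
  -- Part 2: two solutions
  · intro h1 h0
    obtain ⟨u₁, hu₁0, hu₁1, hg₁⟩ := gAux_exists_small c h1 h0
    obtain ⟨u₂, hu₂1, hg₂⟩ := gAux_exists_ge c h1.le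
    have hu₂ : 1 < u₂ := by
      rcases lt_or_eq_of_le hu₂1 with h | h
      · exact h
      · exfalso; rw [← h, gAux_one] at hg₂; linarith
    refine ⟨u₁ * F, u₂ * F, by positivity, by positivity, ?_, ?_, ?_, ?_⟩
    · intro h
      have := mul_right_cancel₀ hF.ne' h
      linarith
    · refine (keyAux a b _ (by positivity)).2 ?_
      rw [mul_assoc, hFE, mul_one]; exact hg₁
    · refine (keyAux a b _ (by positivity)).2 ?_
      rw [mul_assoc, hFE, mul_one]; exact hg₂
    · intro v hv heq
      have hg := (keyAux a b v hv).1 heq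
      have hu0 : 0 < v * E := by positivity
      have hvEF : v * E * F = v := by
        rw [mul_assoc, mul_comm E F, hFE, mul_one]
      rcases le_or_gt (v * E) 1 with hle | hlt
      · have hne : v * E ≠ 1 := by
          intro h; rw [h, gAux_one] at hg; linarith
        left
        have := gAux_anti.injOn (Set.mem_Ioc.2 ⟨hu0, hle⟩)
          (Set.mem_Ioc.2 ⟨hu₁0, hu₁1.le⟩) (by rw [hg, hg₁])
        rw [← hvEF, this]
      · right
        have := gAux_mono.injOn (Set.mem_Ici.2 hlt.le)
          (Set.mem_Ici.2 hu₂1) (by rw [hg, hg₂])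
        rw [← hvEF, this]
  -- Part 3: one solution
  · rintro (hc | hbpos)
    · refine ⟨F, ⟨hF, (keyAux a b F hF).2 ?_⟩, ?_⟩
      · rw [hFE, gAux_one]; exact hc.symm
      · rintro v ⟨hv, heq⟩
        have hg := (keyAux a b v hv).1 heq
        have hu0 : 0 < v * E := by positivity
        have hu1 : v * E = 1 := by
          by_contra hne
          have := gAux_gt (v * E) hu0 hne
          rw [hg] at this; linarith
        have : v * E * F = v := by
          rw [mul_assoc, mul_comm E F, hFE, mul_one]
        rw [← this, hu1, one_mul]
    · have hb0 : 0 < b := by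
        have := Real.exp_pos (-a); nlinarith
      have hc0 : 0 < c := by positivity
      obtain ⟨u₂, hu₂1, hg₂⟩ := gAux_exists_ge c (by linarith)
      refine ⟨u₂ * F, ⟨by positivity, (keyAux a b _ (by positivity)).2 ?_⟩, ?_⟩
      · rw [mul_assoc, hFE, mul_one]; exact hg₂
      · rintro v ⟨hv, heq⟩
        have hg := (keyAux a b v hv).1 heq
        have hu0 : 0 < v * E := by positivity
        have hlt : 1 ≤ v * E := by
          by_contra hgt
          push_neg at hgt
          have := gAux_neg (v * E) hu0 hgt.le
          rw [hg] at this; linarith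
        have hinj := gAux_mono.injOn (Set.mem_Ici.2 hlt)
          (Set.mem_Ici.2 hu₂1) (by rw [hg, hg₂])
        have : v * E * F = v := by
          rw [mul_assoc, mul_comm E F, hFE, mul_one]
        rw [← this, hinj]
end

section
/- Let b be a real number with −1 < b < 0. Then the equation v·ln(v) = v + b has exactly two solutions v > 0; exactly one of them lies in the interval (0,1) and exactly one lies in the interval (1,e). -/
open Real Set

/-- For −1 < b < 0, the equation v·ln(v) = v + b has exactly two
solutions v > 0; exactly one lies in (0,1) and exactly one lies in (1,e). -/
theorem vlogv_two_solutions_located (b : ℝ) (hb₁ : -1 < b) (hb₂ : b < 0) :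
    ∃ v₁ v₂ : ℝ,
      v₁ ∈ Set.Ioo (0:ℝ) 1 ∧ v₂ ∈ Set.Ioo (1:ℝ) (Real.exp 1) ∧
      v₁ * Real.log v₁ = v₁ + b ∧ v₂ * Real.log v₂ = v₂ + b ∧
      ∀ v : ℝ, 0 < v → v * Real.log v = v + b → v = v₁ ∨ v = v₂ := by
  set f : ℝ → ℝ := fun v => v * Real.log v - v with hf
  have hcont : Continuous f := Real.continuous_mul_log.sub continuous_id
  have hderiv : ∀ x : ℝ, x ≠ 0 → HasDerivAt f (Real.log x + 1 - 1) x := fun x hx =>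
    (Real.hasDerivAt_mul_log hx).sub (hasDerivAt_id x)
  have hf0 : f 0 = 0 := by simp [hf]
  have hf1 : f 1 = -1 := by simp [hf]
  have hfe : f (Real.exp 1) = 0 := by simp [hf, Real.log_exp]
  have hanti : StrictAntiOn f (Icc 0 1) := by
    apply strictAntiOn_of_deriv_neg (convex_Icc 0 1) hcont.continuousOn
    intro x hx
    rw [interior_Icc] at hx
    rw [(hderiv x (ne_of_gt hx.1)).deriv]
    simpa using Real.log_neg hx.1 hx.2
  have hmono : StrictMonoOn f (Ici 1) := by
    apply strictMonoOn_of_deriv_pos (convex_Ici 1) hcont.continuousOn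
    intro x hx
    rw [interior_Ici] at hx
    rw [(hderiv x (by have := mem_Ioi.mp hx; linarith : (0:ℝ) < x).ne').deriv]
    simpa using Real.log_pos hx
  have h1 : b ∈ Ioo (f 1) (f 0) := by rw [hf0, hf1]; exact ⟨hb₁, hb₂⟩
  obtain ⟨v₁, hv₁, hfv₁⟩ :=
    intermediate_value_Ioo' (by norm_num : (0:ℝ) ≤ 1) hcont.continuousOn h1
  have h2 : b ∈ Ioo (f 1) (f (Real.exp 1)) := by rw [hfe, hf1]; exact ⟨hb₁, hb₂⟩
  obtain ⟨v₂, hv₂, hfv₂⟩ :=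
    intermediate_value_Ioo (Real.one_le_exp (by norm_num)) hcont.continuousOn h2
  have hfv₁' : v₁ * Real.log v₁ - v₁ = b := hfv₁
  have hfv₂' : v₂ * Real.log v₂ - v₂ = b := hfv₂
  refine ⟨v₁, v₂, hv₁, hv₂, by linarith, by linarith, ?_⟩
  intro v hv hveq
  have hfv : f v = b := by simp only [hf]; linarith
  rcases lt_trichotomy v 1 with h | h | h
  · exact Or.inl (hanti.injOn ⟨hv.le, h.le⟩ ⟨hv₁.1.le, hv₁.2.le⟩ (hfv.trans hfv₁.symm))
  · exfalso; rw [h, hf1] at hfv; linarith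
  · exact Or.inr (hmono.injOn h.le hv₂.1.le (hfv.trans hfv₂.symm))
end
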